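/- There is a universal constant C such that for every even natural number t with D = 2^t, every ε > 0, and all finite sets A, B of tensors of order t with every tensor in B max-invariant, there exist a set A' of regular expressions over {0,1,⊥}, each of length at most 2^{C·t} and with all strings in its language of length exactly D, and a set B' of strings in {0,1}^D, together with bijections a ↦ a' (A → A') and b ↦ b' (B → B'), such that: if some pair (a,b) ∈ A×B has s(a,b) = 1, then some pair (a',b') ∈ A'×B' satisfies b' ∈ L(a'); and if every pair (a,b) ∈ A×B has s(a,b) < ε, then every pair (a',b') ∈ A'×B' satisfies MaxSim(a', b') < ε. -/

import Mathlib

/-- Alternating fold over the Boolean hypercube: flag `true` means the first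
remaining coordinate is combined with AND, `false` means OR; flags alternate. -/
def altFold : (n : ℕ) → Bool → ((Fin n → Bool) → Bool) → Bool
  | 0, _, f => f Fin.elim0
  | n + 1, q, f =>
    if q then
      altFold n (!q) (fun x => f (Fin.cons false x)) &&
        altFold n (!q) (fun x => f (Fin.cons true x))
    else
      altFold n (!q) (fun x => f (Fin.cons false x)) ||
        altFold n (!q) (fun x => f (Fin.cons true x))

/-- Alternating product `p_alt(u,v)`: AND over odd-indexed coordinates
(i₁, i₃, …) and OR over even-indexed ones (i₂, i₄, …), applied to the
coordinatewise AND of `u` and `v`. -/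
def altProd {t : ℕ} (u v : (Fin t → Bool) → Bool) : Bool :=
  altFold t true fun x => u x && v x

/-- A tensor is ∧-invariant if it does not depend on the odd-indexed
coordinates i₁, i₃, …, i_{t-1} (which have 0-based indices 0, 2, …). -/
def AndInvariant {t : ℕ} (u : (Fin t → Bool) → Bool) : Prop :=
  ∀ x y : Fin t → Bool, (∀ i : Fin t, i.1 % 2 = 1 → x i = y i) → u x = u y

/-- A tensor is max-invariant if it does not depend on the even-indexed
coordinates i₂, i₄, …, i_t (which have 0-based indices 1, 3, …). -/
def MaxInvariant {t : ℕ} (u : (Fin t → Bool) → Bool) : Prop :=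
  ∀ x y : Fin t → Bool, (∀ i : Fin t, i.1 % 2 = 0 → x i = y i) → u x = u y

/-- Alternating tropical fold: flag `true` means the first remaining coordinate
is averaged (𝔼), `false` means it is maximized; flags alternate. -/
def tropFold : (n : ℕ) → Bool → ((Fin n → Bool) → ℚ) → ℚ
  | 0, _, f => f Fin.elim0
  | n + 1, q, f =>
    if q then
      (tropFold n (!q) (fun x => f (Fin.cons false x)) +
        tropFold n (!q) (fun x => f (Fin.cons true x))) / 2
    else
      max (tropFold n (!q) (fun x => f (Fin.cons false x)))
        (tropFold n (!q) (fun x => f (Fin.cons true x)))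

/-- Tropical similarity `s(u,v)`: 𝔼 over odd-indexed coordinates and max over
even-indexed ones, applied to the coordinatewise product of `u` and `v`. -/
def tropSim {t : ℕ} (u v : (Fin t → Bool) → Bool) : ℚ :=
  tropFold t true fun x => (if u x then (1 : ℚ) else 0) * (if v x then (1 : ℚ) else 0)

/-- The length (size) of a regular expression: number of symbols/operators. -/
def reSize {α : Type} : RegularExpression α → ℕ
  | RegularExpression.zero => 1
  | RegularExpression.epsilon => 1
  | RegularExpression.char _ => 1
  | RegularExpression.plus r s => reSize r + reSize s + 1
  | RegularExpression.comp r s => reSize r + reSize s + 1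
  | RegularExpression.star r => reSize r + 1

/-- Hamming similarity of two lists (of equal length `n ≥ 1`): the fraction of
positions at which they agree. -/
def hamSim {α : Type} [DecidableEq α] (x y : List α) : ℚ :=
  ((x.zip y).countP fun p => decide (p.1 = p.2)) / x.length

/-- `maxSim R b`: the maximum Hamming similarity `HamSim(x, b)` over strings
`x ∈ L(R)` of length `|b|` (as a supremum in `ℝ`; the set of attained values is
finite, so the supremum is the maximum whenever such an `x` exists). -/
noncomputable def maxSim {α : Type} [DecidableEq α] (R : RegularExpression α)
    (b : List α) : ℝ :=
  sSup {q : ℝ | ∃ x ∈ R.matches', x.length = b.length ∧ (hamSim x b : ℝ) = q}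

section GapAux

open RegularExpression in
/-- The regular expression encoding a tensor: concatenation at 𝔼-levels,
`r₀r₀ + r₁r₁` at max-levels, `char (some true)` / `char none` at the leaves. -/
def regOf : (n : ℕ) → Bool → ((Fin n → Bool) → Bool) → RegularExpression (Option Bool)
  | 0, _, a => if a Fin.elim0 then char (some true) else char none
  | n + 1, q, a =>
    if q then
      comp (regOf n false (fun x => a (Fin.cons false x)))
        (regOf n false (fun x => a (Fin.cons true x)))
    else
      plus
        (comp (regOf n true (fun x => a (Fin.cons false x)))
          (regOf n true (fun x => a (Fin.cons false x))))
        (comp (regOf n true (fun x => a (Fin.cons true x)))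
          (regOf n true (fun x => a (Fin.cons true x))))

/-- The truth table (in lexicographic order) of a tensor, as a string. -/
def strOf : (n : ℕ) → ((Fin n → Bool) → Bool) → List Bool
  | 0, b => [b Fin.elim0]
  | n + 1, b => strOf n (fun x => b (Fin.cons false x)) ++ strOf n (fun x => b (Fin.cons true x))

lemma regOf_succ_true {n : ℕ} (a : (Fin (n+1) → Bool) → Bool) :
    regOf (n+1) true a =
      regOf n false (fun x => a (Fin.cons false x)) * regOf n false (fun x => a (Fin.cons true x)) := by
  simp [regOf]

lemma regOf_succ_false {n : ℕ} (a : (Fin (n+1) → Bool) → Bool) :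
    regOf (n+1) false a =
      regOf n true (fun x => a (Fin.cons false x)) * regOf n true (fun x => a (Fin.cons false x)) +
      regOf n true (fun x => a (Fin.cons true x)) * regOf n true (fun x => a (Fin.cons true x)) := by
  simp [regOf]

lemma strOf_succ {n : ℕ} (b : (Fin (n+1) → Bool) → Bool) :
    strOf (n+1) b =
      strOf n (fun x => b (Fin.cons false x)) ++ strOf n (fun x => b (Fin.cons true x)) := rfl

lemma strOf_length {n : ℕ} (b : (Fin n → Bool) → Bool) : (strOf n b).length = 2 ^ n := by
  induction n with
  | zero => simp [strOf]
  | succ n ih => simp [strOf, ih]; ring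

lemma fin_fun_eq_of_cons {n : ℕ} {a a' : (Fin (n+1) → Bool) → Bool}
    (h : ∀ c : Bool, (fun x => a (Fin.cons c x)) = (fun x => a' (Fin.cons c x))) : a = a' := by
  funext x
  have := congrFun (h (x 0)) (Fin.tail x)
  simpa [Fin.cons_self_tail] using this

lemma strOf_injective (n : ℕ) : Function.Injective (strOf n) := by
  induction n with
  | zero =>
    intro b b' h
    simp [strOf] at h
    funext x
    have : x = Fin.elim0 := funext fun i => i.elim0
    rw [this, h]
  | succ n ih =>
    intro b b' h
    simp only [strOf] at h
    have hl := List.append_inj h (by rw [strOf_length, strOf_length])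
    exact fin_fun_eq_of_cons fun c => by
      cases c
      · exact ih hl.1
      · exact ih hl.2

lemma regOf_injective (n : ℕ) (q : Bool) : Function.Injective (regOf n q) := by
  induction n generalizing q with
  | zero =>
    intro b b' h
    by_cases hb : b Fin.elim0 <;> by_cases hb' : b' Fin.elim0 <;>
      simp [regOf, hb, hb'] at h ⊢ <;>
      · funext x
        have : x = Fin.elim0 := funext fun i => i.elim0
        simp [this, hb, hb'] <;> cases h
  | succ n ih =>
    intro b b' h
    cases q <;> simp only [regOf, if_true, if_false, Bool.false_eq_true, ite_false, ite_true] at h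
    · exact fin_fun_eq_of_cons fun c => by
        cases c
        · injection h with h1 h2; injection h1 with h11 h12; exact ih true h11
        · injection h with h1 h2; injection h2 with h21 h22; exact ih true h21
    · exact fin_fun_eq_of_cons fun c => by
        cases c
        · injection h with h1 h2; exact ih false h1
        · injection h with h1 h2; exact ih false h2

lemma regOf_matches_length {n : ℕ} {q : Bool} {a : (Fin n → Bool) → Bool} :
    ∀ x ∈ (regOf n q a).matches', x.length = 2 ^ n := by
  induction n generalizing q with
  | zero =>
    intro x hx
    by_cases hb : a Fin.elim0 <;> simp [regOf, hb, Set.mem_singleton_iff] at hx <;>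
      subst hx <;> rfl
  | succ n ih =>
    intro x hx
    cases q
    · rw [regOf_succ_false] at hx
      simp only [RegularExpression.matches'_add, RegularExpression.matches'_mul,
        Language.mem_add, Language.mem_mul] at hx
      rcases hx with ⟨u, hu, v, hv, rfl⟩ | ⟨u, hu, v, hv, rfl⟩ <;>
        (simp [List.length_append, ih _ hu, ih _ hv, pow_succ]; ring)
    · rw [regOf_succ_true] at hx
      simp only [RegularExpression.matches'_mul, Language.mem_mul] at hx
      rcases hx with ⟨u, hu, v, hv, rfl⟩
      simp [List.length_append, ih _ hu, ih _ hv, pow_succ]; ring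


/-- Invariance relative to a flag: the tensor depends only on the coordinates
whose parity matches the flag. -/
def FlagInv (n : ℕ) (q : Bool) (b : (Fin n → Bool) → Bool) : Prop :=
  ∀ x y : Fin n → Bool, (∀ i : Fin n, ((i : ℕ) % 2 = 0 ↔ q = true) → x i = y i) → b x = b y

lemma FlagInv.cons {n : ℕ} {q : Bool} {b : (Fin (n+1) → Bool) → Bool}
    (h : FlagInv (n+1) q b) (c : Bool) : FlagInv n (!q) (fun x => b (Fin.cons c x)) := by
  intro x y hx
  apply h
  intro i
  refine Fin.cases ?_ ?_ i
  · intro _; simp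
  · intro j hj
    simp only [Fin.cons_succ]
    apply hx
    have : ((j.succ : ℕ)) % 2 = 0 ↔ ¬ ((j : ℕ) % 2 = 0) := by
      rw [Fin.val_succ]; omega
    rw [this] at hj
    cases q <;> simp_all

lemma FlagInv.cons_eq {n : ℕ} {b : (Fin (n+1) → Bool) → Bool}
    (h : FlagInv (n+1) false b) :
    (fun x => b (Fin.cons false x)) = (fun x => b (Fin.cons true x)) := by
  funext x
  apply h
  intro i
  refine Fin.cases ?_ ?_ i
  · intro h0; simp at h0
  · intro j _; simp

lemma tropFold_nonneg {n : ℕ} {q : Bool} {f : (Fin n → Bool) → ℚ}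
    (hf : ∀ x, 0 ≤ f x) : 0 ≤ tropFold n q f := by
  induction n generalizing q with
  | zero => exact hf _
  | succ n ih =>
    cases q <;> simp only [tropFold, Bool.not_true, Bool.not_false, if_true, if_false, Bool.false_eq_true, ite_false, ite_true]
    · exact le_max_of_le_left (ih fun x => hf _)
    · have h1 := ih (q := false) (f := fun x => f (Fin.cons false x)) fun x => hf _
      have h2 := ih (q := false) (f := fun x => f (Fin.cons true x)) fun x => hf _
      linarith
lemma tropFold_le_one {n : ℕ} {q : Bool} {f : (Fin n → Bool) → ℚ}
    (hf : ∀ x, f x ≤ 1) : tropFold n q f ≤ 1 := by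
  induction n generalizing q with
  | zero => exact hf _
  | succ n ih =>
    cases q <;> simp only [tropFold, Bool.not_true, Bool.not_false, if_true, if_false, Bool.false_eq_true, ite_false, ite_true]
    · exact max_le (ih fun x => hf _) (ih fun x => hf _)
    · have h1 := ih (q := false) (f := fun x => f (Fin.cons false x)) fun x => hf _
      have h2 := ih (q := false) (f := fun x => f (Fin.cons true x)) fun x => hf _
      linarith

lemma tropFold_succ_true {n : ℕ} (f : (Fin (n+1) → Bool) → ℚ) :
    tropFold (n+1) true f =
      (tropFold n false (fun x => f (Fin.cons false x)) +
        tropFold n false (fun x => f (Fin.cons true x))) / 2 := by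
  simp [tropFold]

lemma tropFold_succ_false {n : ℕ} (f : (Fin (n+1) → Bool) → ℚ) :
    tropFold (n+1) false f =
      max (tropFold n true (fun x => f (Fin.cons false x)))
        (tropFold n true (fun x => f (Fin.cons true x))) := by
  simp [tropFold]

/-- The coordinatewise 0/1 product of two tensors. -/
def prodQ {n : ℕ} (a b : (Fin n → Bool) → Bool) : (Fin n → Bool) → ℚ :=
  fun x => (if a x then (1 : ℚ) else 0) * (if b x then (1 : ℚ) else 0)

lemma prodQ_nonneg {n : ℕ} (a b : (Fin n → Bool) → Bool) (x : Fin n → Bool) :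
    0 ≤ prodQ a b x := by
  unfold prodQ; positivity

lemma prodQ_le_one {n : ℕ} (a b : (Fin n → Bool) → Bool) (x : Fin n → Bool) :
    prodQ a b x ≤ 1 := by
  unfold prodQ; split_ifs <;> norm_num

lemma prodQ_cons {n : ℕ} (a b : (Fin (n+1) → Bool) → Bool) (c : Bool) :
    (fun x => prodQ a b (Fin.cons c x)) =
      prodQ (fun x => a (Fin.cons c x)) (fun x => b (Fin.cons c x)) := rfl


lemma regOf_matches_of_eq_one :
    ∀ (n : ℕ) (q : Bool) (a b : (Fin n → Bool) → Bool), FlagInv n q b →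
      tropFold n q (prodQ a b) = 1 →
      ((strOf n b).map some) ∈ (regOf n q a).matches' := by
  intro n
  induction n with
  | zero =>
    intro q a b _ h1
    have : prodQ a b Fin.elim0 = 1 := h1
    unfold prodQ at this
    by_cases ha : a Fin.elim0 <;> by_cases hb : b Fin.elim0 <;> simp [ha, hb] at this ⊢
    simp [strOf, hb, regOf, ha, Set.mem_singleton_iff]
    rfl
  | succ n ih =>
    intro q a b hinv h1
    have hb0 := hinv.cons false
    have hb1 := hinv.cons true
    cases q
    · -- max level
      rw [tropFold_succ_false] at h1
      rw [regOf_succ_false]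
      simp only [RegularExpression.matches'_add, RegularExpression.matches'_mul,
        Language.mem_add, Language.mem_mul]
      have hbb := hinv.cons_eq
      have hstr : strOf (n+1) b =
          strOf n (fun x => b (Fin.cons false x)) ++ strOf n (fun x => b (Fin.cons false x)) := by
        rw [strOf_succ, ← hbb]
      rcases max_choice (tropFold n true (fun x => prodQ a b (Fin.cons false x)))
          (tropFold n true (fun x => prodQ a b (Fin.cons true x))) with hm | hm <;>
        rw [hm] at h1
      · left
        rw [prodQ_cons] at h1
        have := ih true _ _ (by simpa using hb0) h1
        exact ⟨_, this, _, this, by rw [hstr, List.map_append]⟩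
      · right
        rw [prodQ_cons] at h1
        have := ih true _ _ (by simpa using hb1) h1
        refine ⟨_, this, _, this, ?_⟩
        rw [hstr, hbb, List.map_append]
    · -- E level
      rw [tropFold_succ_true] at h1
      rw [regOf_succ_true]
      simp only [RegularExpression.matches'_mul, Language.mem_mul]
      have b1 : tropFold n false (fun x => prodQ a b (Fin.cons false x)) ≤ 1 :=
        tropFold_le_one fun x => prodQ_le_one _ _ _
      have b2 : tropFold n false (fun x => prodQ a b (Fin.cons true x)) ≤ 1 :=
        tropFold_le_one fun x => prodQ_le_one _ _ _
      have e1 : tropFold n false (fun x => prodQ a b (Fin.cons false x)) = 1 := by linarith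
      have e2 : tropFold n false (fun x => prodQ a b (Fin.cons true x)) = 1 := by linarith
      rw [prodQ_cons] at e1 e2
      have i1 := ih false _ _ (by simpa using hb0) e1
      have i2 := ih false _ _ (by simpa using hb1) e2
      exact ⟨_, i1, _, i2, by rw [strOf_succ, List.map_append]⟩

lemma countP_le_of_matches :
    ∀ (n : ℕ) (q : Bool) (a b : (Fin n → Bool) → Bool), FlagInv n q b →
      ∀ x ∈ (regOf n q a).matches',
        ((x.zip ((strOf n b).map some)).countP (fun p => decide (p.1 = p.2)) : ℚ) ≤
          2 ^ n * tropFold n q (prodQ a b) := by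
  intro n
  induction n with
  | zero =>
    intro q a b _ x hx
    have : tropFold 0 q (prodQ a b) = prodQ a b Fin.elim0 := rfl
    rw [this]
    unfold prodQ
    by_cases ha : a Fin.elim0 <;> by_cases hb : b Fin.elim0 <;>
      simp [regOf, ha, Set.mem_singleton_iff] at hx <;>
      subst hx <;> norm_num [strOf, ha, hb, List.countP, List.countP.go] <;> rfl
  | succ n ih =>
    intro q a b hinv x hx
    have hb0 := hinv.cons false
    have hb1 := hinv.cons true
    have hslen : ∀ (c : (Fin n → Bool) → Bool), ((strOf n c).map some).length = 2 ^ n := by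
      intro c; rw [List.length_map, strOf_length]
    cases q
    · -- max level
      rw [regOf_succ_false] at hx
      rw [tropFold_succ_false]
      have hbb : (fun x => b (Fin.cons false x)) = (fun x => b (Fin.cons true x)) :=
        hinv.cons_eq
      simp only [RegularExpression.matches'_add, RegularExpression.matches'_mul,
        Language.mem_add, Language.mem_mul] at hx
      have key : ∀ (c : Bool) (u v : List (Option Bool)),
          u ∈ (regOf n true (fun x => a (Fin.cons c x))).matches' →
          v ∈ (regOf n true (fun x => a (Fin.cons c x))).matches' →
          (((u ++ v).zip ((strOf (n+1) b).map some)).countP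
              (fun p => decide (p.1 = p.2)) : ℚ) ≤
            2 ^ (n+1) * tropFold n true (prodQ (fun x => a (Fin.cons c x))
              (fun x => b (Fin.cons c x))) := by
        intro c u v hu hv
        have hstr : (strOf (n+1) b).map some =
            (strOf n (fun x => b (Fin.cons c x))).map some ++
              (strOf n (fun x => b (Fin.cons c x))).map some := by
          cases c
          · rw [strOf_succ, ← hbb, List.map_append]
          · rw [strOf_succ, hbb, List.map_append]
        have hul : u.length = 2 ^ n := regOf_matches_length u hu
        rw [hstr, List.zip_append (by rw [hul, hslen]), List.countP_append]
        have c1 := ih true _ _ (by simpa using hinv.cons c) u hu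
        have c2 := ih true _ _ (by simpa using hinv.cons c) v hv
        push_cast
        rw [pow_succ]
        nlinarith [c1, c2]
      rcases hx with ⟨u, hu, v, hv, rfl⟩ | ⟨u, hu, v, hv, rfl⟩
      · refine le_trans (key false u v hu hv) ?_
        have := le_max_left (tropFold n true (fun x => prodQ a b (Fin.cons false x)))
          (tropFold n true (fun x => prodQ a b (Fin.cons true x)))
        rw [prodQ_cons] at this
        have h2 : (0:ℚ) ≤ 2 ^ (n+1) := by positivity
        exact mul_le_mul_of_nonneg_left (by rw [← prodQ_cons]; exact le_max_left _ _) h2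
      · refine le_trans (key true u v hu hv) ?_
        have h2 : (0:ℚ) ≤ 2 ^ (n+1) := by positivity
        exact mul_le_mul_of_nonneg_left (by rw [← prodQ_cons]; exact le_max_right _ _) h2
    · -- E level
      rw [regOf_succ_true] at hx
      rw [tropFold_succ_true]
      simp only [RegularExpression.matches'_mul, Language.mem_mul] at hx
      rcases hx with ⟨u, hu, v, hv, rfl⟩
      have hstr : (strOf (n+1) b).map some =
          (strOf n (fun x => b (Fin.cons false x))).map some ++
            (strOf n (fun x => b (Fin.cons true x))).map some := by
        rw [strOf_succ, List.map_append]
      have hul : u.length = 2 ^ n := regOf_matches_length u hu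
      rw [hstr, List.zip_append (by rw [hul, hslen]), List.countP_append]
      have c1 := ih false _ _ (by simpa using hb0) u hu
      have c2 := ih false _ _ (by simpa using hb1) v hv
      rw [prodQ_cons, prodQ_cons]
      push_cast
      rw [pow_succ]
      nlinarith [c1, c2]


lemma regOf_size {n : ℕ} {q : Bool} (a : (Fin n → Bool) → Bool) :
    reSize (regOf n q a) + 1 ≤ 2 * 4 ^ n := by
  induction n generalizing q with
  | zero => by_cases hb : a Fin.elim0 <;> simp [regOf, hb, reSize]
  | succ n ih =>
    cases q <;> simp only [regOf, Bool.false_eq_true, ite_false, ite_true, reSize]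
    · have h0 := ih (q := true) (fun x => a (Fin.cons false x))
      have h1 := ih (q := true) (fun x => a (Fin.cons true x))
      rw [pow_succ]
      omega
    · have h0 := ih (q := false) (fun x => a (Fin.cons false x))
      have h1 := ih (q := false) (fun x => a (Fin.cons true x))
      rw [pow_succ]
      omega

lemma MaxInvariant.flagInv {t : ℕ} {b : (Fin t → Bool) → Bool} (h : MaxInvariant b) :
    FlagInv t true b :=
  fun x y hxy => h x y fun i hi => hxy i (by simp [hi])

lemma maxSim_le_tropSim {t : ℕ} (a b : (Fin t → Bool) → Bool) (hb : MaxInvariant b) :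
    maxSim (regOf t true a) ((strOf t b).map some) ≤ (tropSim a b : ℝ) := by
  have htrop : tropSim a b = tropFold t true (prodQ a b) := rfl
  have hnn : (0:ℚ) ≤ tropSim a b := by
    rw [htrop]; exact tropFold_nonneg fun x => prodQ_nonneg _ _ _
  apply Real.sSup_le
  · rintro r ⟨x, hx, hlen, rfl⟩
    rw [Rat.cast_le]
    have hxlen : x.length = 2 ^ t := regOf_matches_length x hx
    have hcount := countP_le_of_matches t true a b hb.flagInv x hx
    unfold hamSim
    rw [hxlen, htrop, div_le_iff₀ (by positivity)]
    calc ((x.zip ((strOf t b).map some)).countP (fun p => decide (p.1 = p.2)) : ℚ)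
        ≤ 2 ^ t * tropFold t true (prodQ a b) := hcount
      _ = tropFold t true (prodQ a b) * (2 ^ t : ℕ) := by push_cast; ring
  · exact_mod_cast hnn

end GapAux

/-- There is a universal constant `C` such that for every even
`t` with `D = 2^t`, every `ε > 0`, and all finite sets `A, B` of tensors of
order `t` with every tensor in `B` max-invariant, there are injective-on-`A`/`B`
maps `f` (to regular expressions over `{0,1,⊥} = Option Bool`, each of length
at most `2^{C·t}` and with all strings of its language of length exactly `D`)
and `g` (to strings in `{0,1}^D`) such that: if some pair has `s(a,b) = 1` then
some `g b ∈ L(f a)`; and if every pair has `s(a,b) < ε` then every pair has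
`MaxSim(f a, g b) < ε`. -/
theorem gap_maxTropSim_to_regexp_string_pair :
    ∃ C : ℕ, 0 < C ∧
      ∀ t : ℕ, Even t →
        ∀ ε : ℚ, 0 < ε →
          ∀ A B : Finset ((Fin t → Bool) → Bool),
            (∀ b ∈ B, MaxInvariant b) →
            ∃ (f : ((Fin t → Bool) → Bool) → RegularExpression (Option Bool))
              (g : ((Fin t → Bool) → Bool) → List Bool),
              Set.InjOn f A ∧ Set.InjOn g B ∧
              (∀ a ∈ A, reSize (f a) ≤ 2 ^ (C * t)) ∧
              (∀ a ∈ A, ∀ x ∈ (f a).matches', x.length = 2 ^ t) ∧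
              (∀ b ∈ B, (g b).length = 2 ^ t) ∧
              ((∃ a ∈ A, ∃ b ∈ B, tropSim a b = 1) →
                ∃ a ∈ A, ∃ b ∈ B, ((g b).map some) ∈ (f a).matches') ∧
              ((∀ a ∈ A, ∀ b ∈ B, tropSim a b < ε) →
                ∀ a ∈ A, ∀ b ∈ B, maxSim (f a) ((g b).map some) < (ε : ℝ)) := by
  refine ⟨4, by norm_num, ?_⟩
  intro t _ ε hε A B hB
  refine ⟨regOf t true, strOf t, (regOf_injective t true).injOn, (strOf_injective t).injOn,
    ?_, ?_, ?_, ?_, ?_⟩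
  · intro a _
    have h1 := regOf_size (n := t) (q := true) a
    have h2 : 2 * 4 ^ t ≤ 2 ^ (4 * t) + 1 := by
      have h4 : (4:ℕ) ^ t = 2 ^ (2 * t) := by
        rw [show (4:ℕ) = 2 ^ 2 by norm_num, ← pow_mul]
      rcases Nat.eq_zero_or_pos t with rfl | ht
      · norm_num
      · have : 2 * 4 ^ t = 2 ^ (2 * t + 1) := by rw [h4, pow_succ]; ring
        rw [this]
        exact le_trans (Nat.pow_le_pow_right (by norm_num) (by omega)) (Nat.le_succ _)
    omega
  · intro a _ x hx
    exact regOf_matches_length x hx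
  · intro b _
    exact strOf_length b
  · rintro ⟨a, ha, b, hb, h1⟩
    exact ⟨a, ha, b, hb, regOf_matches_of_eq_one t true a b (hB b hb).flagInv h1⟩
  · intro h a ha b hb
    exact lt_of_le_of_lt (maxSim_le_tropSim a b (hB b hb)) (by exact_mod_cast h a ha b hb)
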